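/- Let K be a field of characteristic zero and V a finite-dimensional K-vector space. Let e, f, h and e', f', h' be linear endomorphisms of V satisfying the sl₂-triple relations h∘e − e∘h = 2e, h∘f − f∘h = −2f, e∘f − f∘e = h, and likewise h'∘e' − e'∘h' = 2e', h'∘f' − f'∘h' = −2f', e'∘f' − f'∘e' = h'. If e = e' and h∘h' = h'∘h, then h = h' and f = f'. (The uniqueness of sl₂-triples used in the proof of Theorem 4.4 (Lefschetz-thm)(ii).) -/

import Mathlib

open LieModule Set

private lemma nsmul_eq_smul_k (K : Type*) {V : Type*} [Field K] [AddCommGroup V]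
    [Module K V] (x : V) : (2 : ℕ) • x = (2 : K) • x := by
  rw [← Nat.cast_smul_eq_nsmul K 2 x]; norm_num

private lemma nsmul_two_eq_zero (K : Type*) {V : Type*} [Field K] [CharZero K] [AddCommGroup V]
    [Module K V] {x : V} (hx : (2 : ℕ) • x = 0) : x = 0 := by
  rw [nsmul_eq_smul_k K] at hx
  simpa using (smul_eq_zero.mp hx).resolve_left (by norm_num)

section Aux

variable {K L M : Type*} [Field K] [CharZero K] [LieRing L] [LieAlgebra K L]
  [AddCommGroup M] [Module K M] [LieRingModule L M] [LieModule K L M]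
  [FiniteDimensional K M] {h e f : L} {g : M}

private lemma aux_lie_f_pow (n : ℕ) :
    ⁅f, ((toEnd K L M f) ^ n) g⁆ = ((toEnd K L M f) ^ (n + 1)) g := by
  simp [pow_succ']

private lemma aux_lie_h_pow (hhf : ⁅h, f⁆ = -((2 : K) • f))
    (hhg : ⁅h, g⁆ = (-2 : K) • g) (n : ℕ) :
    ⁅h, ((toEnd K L M f) ^ n) g⁆ = ((-2 : K) - 2 * n) • ((toEnd K L M f) ^ n) g := by
  induction n with
  | zero => simpa using hhg
  | succ n ih =>
    rw [pow_succ', Module.End.mul_apply, toEnd_apply_apply, Nat.cast_add, Nat.cast_one,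
      leibniz_lie h, hhf, ← neg_smul, ih, lie_smul, smul_lie, ← add_smul]
    congr 1
    ring

private lemma aux_lie_e_pow_succ (hef : ⁅e, f⁆ = h) (hhf : ⁅h, f⁆ = -((2 : K) • f))
    (hhg : ⁅h, g⁆ = (-2 : K) • g) (hfeg : ⁅f, ⁅e, g⁆⁆ = 0) (n : ℕ) :
    ⁅e, ((toEnd K L M f) ^ (n + 1)) g⁆
      = (((n : K) + 1) * ((-2 : K) - n)) • ((toEnd K L M f) ^ n) g := by
  induction n with
  | zero =>
    simp only [zero_add, pow_one, toEnd_apply_apply, Nat.cast_zero, sub_zero, one_mul,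
      pow_zero, Module.End.one_apply, leibniz_lie e, hef, hfeg, hhg, add_zero]
  | succ n ih =>
    rw [pow_succ', Module.End.mul_apply, toEnd_apply_apply, leibniz_lie e, hef,
      aux_lie_h_pow hhf hhg, ih, lie_smul, aux_lie_f_pow, ← add_smul,
      Nat.cast_add, Nat.cast_one]
    congr 1
    ring

/-- The key chain lemma: if `g` has `ad h`-weight `-2`, and `⁅f, ⁅e, g⁆⁆ = 0`, then `g = 0`. -/
private lemma aux_chain (hef : ⁅e, f⁆ = h) (hhf : ⁅h, f⁆ = -((2 : K) • f))
    (hhg : ⁅h, g⁆ = (-2 : K) • g) (hfeg : ⁅f, ⁅e, g⁆⁆ = 0) : g = 0 := by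
  by_contra hg
  have hex : ∃ n : ℕ, ((toEnd K L M f) ^ n) g = 0 := by
    by_contra! contra
    have hs : (range <| fun (n : ℕ) ↦ (-2 : K) - 2 * n).Infinite := by
      rw [infinite_range_iff (fun n m hnm ↦ by
        field_simp at hnm
        have := sub_right_injective hnm
        exact_mod_cast this)]
      infer_instance
    exact hs ((toEnd K L M h).eigenvectors_linearIndependent
      {(-2 : K) - 2 * n | n : ℕ}
      (fun ⟨s, hs⟩ ↦ ((toEnd K L M f) ^ Classical.choose hs) g)
      (fun ⟨r, hr⟩ ↦ by simp [aux_lie_h_pow hhf hhg, Classical.choose_spec hr, contra,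
        Module.End.hasEigenvector_iff, Module.End.mem_eigenspace_iff])).finite
  obtain ⟨n, hn₁, hn₂⟩ := Nat.exists_not_and_succ_of_not_zero_of_exists
    (p := fun n ↦ ((toEnd K L M f) ^ n) g = 0) (by simpa using hg) hex
  have hB := aux_lie_e_pow_succ hef hhf hhg hfeg (K := K) (n := n)
  rw [hn₂, lie_zero, eq_comm, smul_eq_zero_iff_left hn₁] at hB
  have hc1 : ((n : K) + 1) ≠ 0 := by exact_mod_cast Nat.cast_add_one_ne_zero (R := K) n
  have hc2 : ((-2 : K) - n) ≠ 0 := by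
    intro hcon
    have h6 : ((n + 2 : ℕ) : K) = 0 := by push_cast; linear_combination -hcon
    have := Nat.cast_eq_zero.mp h6
    omega
  exact (mul_ne_zero hc1 hc2) hB

end Aux

attribute [local instance 100] LieRing.ofAssociativeRing

/-- Uniqueness of sl₂-triples (used in the proof of Theorem 4.4 (Lefschetz-thm)(ii)):
two sl₂-triples `(e,f,h)` and `(e',f',h')` on a finite-dimensional vector space over a
field of characteristic zero with `e = e'` and `[h,h'] = 0` coincide. -/
theorem stmt13 (K V : Type*) [Field K] [CharZero K] [AddCommGroup V] [Module K V]
    [FiniteDimensional K V] (e f h e' f' h' : Module.End K V)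
    (h1 : h * e - e * h = 2 • e) (h2 : h * f - f * h = -(2 • f)) (h3 : e * f - f * e = h)
    (h1' : h' * e' - e' * h' = 2 • e') (h2' : h' * f' - f' * h' = -(2 • f'))
    (h3' : e' * f' - f' * e' = h')
    (hee : e = e') (hhh : h * h' = h' * h) :
    h = h' ∧ f = f' := by
  subst hee
  -- translate hypotheses to Lie bracket form
  rw [show h * e - e * h = ⁅h, e⁆ from (Ring.lie_def h e).symm] at h1
  rw [show h * f - f * h = ⁅h, f⁆ from (Ring.lie_def h f).symm] at h2
  rw [show e * f - f * e = ⁅e, f⁆ from (Ring.lie_def e f).symm] at h3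
  rw [show h' * e - e * h' = ⁅h', e⁆ from (Ring.lie_def h' e).symm] at h1'
  rw [show h' * f' - f' * h' = ⁅h', f'⁆ from (Ring.lie_def h' f').symm] at h2'
  rw [show e * f' - f' * e = ⁅e, f'⁆ from (Ring.lie_def e f').symm] at h3'
  have hhh' : ⁅h, h'⁆ = 0 := by rw [Ring.lie_def, hhh, sub_self]
  by_cases he0 : e = 0
  · -- degenerate case: everything is zero
    subst he0
    have hh : h = 0 := by rw [← h3]; simp
    have hh' : h' = 0 := by rw [← h3']; simp
    have hf : f = 0 := by
      have hz2 := h2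
      rw [hh] at hz2
      simp only [zero_lie, lie_zero] at hz2
      exact nsmul_two_eq_zero K (neg_eq_zero.mp hz2.symm)
    have hf' : f' = 0 := by
      have hz2 := h2'
      rw [hh'] at hz2
      simp only [zero_lie, lie_zero] at hz2
      exact nsmul_two_eq_zero K (neg_eq_zero.mp hz2.symm)
    exact ⟨hh.trans hh'.symm, hf.trans hf'.symm⟩
  · have hh0 : h ≠ 0 := by
      intro hc
      apply he0
      have h20 : (2 : ℕ) • e = 0 := by rw [← h1, hc]; simp
      exact nsmul_two_eq_zero K h20
    have hh0' : h' ≠ 0 := by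
      intro hc
      apply he0
      have h20 : (2 : ℕ) • e = 0 := by rw [← h1', hc]; simp
      exact nsmul_two_eq_zero K h20
    have t : IsSl2Triple h e f := ⟨hh0, h3, h1, h2⟩
    have t' : IsSl2Triple h' e f' := ⟨hh0', h3', h1', h2'⟩
    -- Step 1: h = h'
    have hz : h = h' := by
      by_contra hzne
      have hzne' : h - h' ≠ 0 := sub_ne_zero.mpr hzne
      have hez : ⁅e, h - h'⁆ = 0 := by
        rw [lie_sub, ← lie_skew e h, ← lie_skew e h', h1, h1']
        simp
      have P : t.HasPrimitiveVectorWith (h - h') (0 : K) :=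
        { ne_zero := hzne'
          lie_h := by rw [lie_sub, lie_self, hhh', sub_zero, zero_smul]
          lie_e := hez }
      have P' : t'.HasPrimitiveVectorWith (h - h') (0 : K) :=
        { ne_zero := hzne'
          lie_h := by
            rw [lie_sub, lie_self, sub_zero, ← lie_skew h' h, hhh', neg_zero, zero_smul]
          lie_e := hez }
      have hfz : ⁅f, h - h'⁆ = 0 := by
        have := P.pow_toEnd_f_eq_zero_of_eq_nat (n := 0) (by norm_num)
        simpa using this
      have hfz' : ⁅f', h - h'⁆ = 0 := by
        have := P'.pow_toEnd_f_eq_zero_of_eq_nat (n := 0) (by norm_num)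
        simpa using this
      have hEg : ⁅e, f - f'⁆ = h - h' := by rw [lie_sub, h3, h3']
      have hHg : ⁅h, f - f'⁆ = (-2 : K) • (f - f') := by
        have hhf' : ⁅h, f'⁆ = -((2:K) • f') := by
          have : ⁅h - h', f'⁆ = 0 := by
            rw [← lie_skew (h - h') f', hfz', neg_zero]
          have hd : ⁅h, f'⁆ = ⁅h', f'⁆ := by
            have h7 : ⁅h, f'⁆ - ⁅h', f'⁆ = 0 := by rw [← sub_lie]; exact this
            exact sub_eq_zero.mp h7
          rw [hd, h2', nsmul_eq_smul_k K]
        rw [lie_sub, h2, hhf', nsmul_eq_smul_k K]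
        module
      have hfeg : ⁅f, ⁅e, f - f'⁆⁆ = 0 := by rw [hEg]; exact hfz
      have hg0 : f - f' = 0 :=
        aux_chain (h3 : ⁅e, f⁆ = h) (by rw [h2, nsmul_eq_smul_k K]) hHg hfeg
      rw [hg0, lie_zero] at hEg
      exact hzne' hEg.symm
    -- Step 2: f = f'
    refine ⟨hz, ?_⟩
    by_contra hfne
    have hgne : f - f' ≠ 0 := sub_ne_zero.mpr hfne
    have P2 : t.HasPrimitiveVectorWith (f - f') (-2 : K) :=
      { ne_zero := hgne
        lie_h := by
          rw [lie_sub, h2, hz, h2', nsmul_eq_smul_k K]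
          module
        lie_e := by rw [lie_sub, h3, h3', hz, sub_self] }
    obtain ⟨n, hn⟩ := P2.exists_nat
    have h6 : ((n + 2 : ℕ) : K) = 0 := by push_cast; linear_combination -hn
    have := Nat.cast_eq_zero.mp h6
    omega
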